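/- Let d = d₁ + d₂, let u : ℝ^{d₁} × ℝ^{d₂} → ℝ be continuous and ℤ^{d₁} × ℤ^{d₂}-periodic, and let φ : ℝ^{d₁} → ℝ be continuous with φ(z) → +∞ as ‖z‖ → ∞. For ε > 0 and x = (x₁,x₂), y = (y₁,y₂) set ψ_ε(x,y) := u(x) − u(y) − φ(x₁−y₁) − ε⁻²‖x₂−y₂‖², and set M := sup { u(x₁,x₂) − u(y₁,x₂) − φ(x₁−y₁) : x₁, y₁ ∈ ℝ^{d₁}, x₂ ∈ ℝ^{d₂} }. Then for each ε > 0 the function ψ_ε attains its global maximum M^ε at some point (x^ε, y^ε) with x^ε ∈ [0,1]^d, and for any such choice of maximizers there exist a sequence ε_n → 0⁺ and a point (x̄, ȳ) with x̄₂ = ȳ₂ such that M^{ε_n} → M, ε_n⁻²‖x₂^{ε_n} − y₂^{ε_n}‖² → 0, (x^{ε_n}, y^{ε_n}) → (x̄, ȳ), and u(x̄₁, x̄₂) − u(ȳ₁, x̄₂) − φ(x̄₁ − ȳ₁) = M. -/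

import Mathlib

open Filter Set Metric Bornology

private lemma aux_cube_compact (d : ℕ) :
    IsCompact {z : EuclideanSpace ℝ (Fin d) | ∀ i, z i ∈ Icc (0:ℝ) 1} := by
  have h : {z : EuclideanSpace ℝ (Fin d) | ∀ i, z i ∈ Icc (0:ℝ) 1}
      = (EuclideanSpace.equiv (Fin d) ℝ).toHomeomorph ⁻¹' (Set.univ.pi fun _ => Icc (0:ℝ) 1) := by
    ext z
    simp only [mem_setOf_eq, mem_preimage, Set.mem_pi, mem_univ, true_implies]
    rfl
  rw [h, Homeomorph.isCompact_preimage]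
  exact isCompact_univ_pi fun _ => isCompact_Icc

private lemma aux_coer {d : ℕ} (φ : EuclideanSpace ℝ (Fin d) → ℝ)
    (hφcoer : Tendsto φ (Filter.comap (fun z => ‖z‖) atTop) atTop) (b : ℝ) :
    ∃ R : ℝ, ∀ z, R ≤ ‖z‖ → b ≤ φ z := by
  have h : ∀ᶠ z in Filter.comap (fun z : EuclideanSpace ℝ (Fin d) => ‖z‖) atTop, b ≤ φ z :=
    hφcoer.eventually (eventually_ge_atTop b)
  rw [eventually_comap, eventually_atTop] at h
  obtain ⟨R, hR⟩ := h
  exact ⟨R, fun z hz => hR ‖z‖ hz z rfl⟩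

set_option maxHeartbeats 4000000 in
/-- **Penalization lemma (Lemma on maximum points).**
Let `u` be continuous and `ℤ^{d₁} × ℤ^{d₂}`-periodic, `φ` continuous and coercive.
Set `ψ_ε(x,y) = u(x) − u(y) − φ(x₁−y₁) − ε⁻²‖x₂−y₂‖²` and let
`M = sup { u(x₁,x₂) − u(y₁,x₂) − φ(x₁−y₁) }`. Then for each `ε > 0` the function `ψ_ε`
attains its global maximum at a point whose first entry lies in `[0,1]^d`, and for any
choice of such maximizers there is a sequence `ε_n → 0⁺` along which the maximum values
converge to `M`, the penalization term vanishes, and the points converge to a maximum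
point `(x̄, ȳ)` of the unpenalized problem with `x̄₂ = ȳ₂`. -/
theorem penalization_maximum_points {d₁ d₂ : ℕ}
    (u : EuclideanSpace ℝ (Fin d₁) × EuclideanSpace ℝ (Fin d₂) → ℝ) (hu : Continuous u)
    (huper : ∀ (k : Fin d₁ → ℤ) (l : Fin d₂ → ℤ)
        (x₁ : EuclideanSpace ℝ (Fin d₁)) (x₂ : EuclideanSpace ℝ (Fin d₂)),
      u (x₁ + (WithLp.equiv 2 (Fin d₁ → ℝ)).symm (fun i => (k i : ℝ)),
         x₂ + (WithLp.equiv 2 (Fin d₂ → ℝ)).symm (fun i => (l i : ℝ))) = u (x₁, x₂))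
    (φ : EuclideanSpace ℝ (Fin d₁) → ℝ) (hφ : Continuous φ)
    (hφcoer : Tendsto φ (Filter.comap (fun z => ‖z‖) atTop) atTop)
    (M : ℝ)
    (hM : M = sSup {m : ℝ | ∃ (x₁ y₁ : EuclideanSpace ℝ (Fin d₁))
      (x₂ : EuclideanSpace ℝ (Fin d₂)), m = u (x₁, x₂) - u (y₁, x₂) - φ (x₁ - y₁)})
    (ψ : ℝ → (EuclideanSpace ℝ (Fin d₁) × EuclideanSpace ℝ (Fin d₂))
          → (EuclideanSpace ℝ (Fin d₁) × EuclideanSpace ℝ (Fin d₂)) → ℝ)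
    (hψ : ∀ ε x y,
      ψ ε x y = u x - u y - φ (x.1 - y.1) - (ε ^ 2)⁻¹ * ‖x.2 - y.2‖ ^ 2) :
    -- existence of maximizers with first entry in the unit cube
    (∀ ε : ℝ, 0 < ε →
      ∃ x y : EuclideanSpace ℝ (Fin d₁) × EuclideanSpace ℝ (Fin d₂),
        (∀ i, x.1 i ∈ Icc (0:ℝ) 1) ∧ (∀ i, x.2 i ∈ Icc (0:ℝ) 1) ∧
        ∀ x' y', ψ ε x' y' ≤ ψ ε x y) ∧
    -- for any choice of such maximizers, a subsequence converges as described
    (∀ P Q : ℝ → EuclideanSpace ℝ (Fin d₁) × EuclideanSpace ℝ (Fin d₂),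
      (∀ ε : ℝ, 0 < ε →
        (∀ i, (P ε).1 i ∈ Icc (0:ℝ) 1) ∧ (∀ i, (P ε).2 i ∈ Icc (0:ℝ) 1) ∧
        ∀ x' y', ψ ε x' y' ≤ ψ ε (P ε) (Q ε)) →
      ∃ (e : ℕ → ℝ) (xb yb : EuclideanSpace ℝ (Fin d₁) × EuclideanSpace ℝ (Fin d₂)),
        (∀ n, 0 < e n) ∧
        Tendsto e atTop (nhds 0) ∧
        xb.2 = yb.2 ∧
        Tendsto (fun n => ψ (e n) (P (e n)) (Q (e n))) atTop (nhds M) ∧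
        Tendsto (fun n => ((e n) ^ 2)⁻¹ * ‖(P (e n)).2 - (Q (e n)).2‖ ^ 2) atTop (nhds 0) ∧
        Tendsto (fun n => (P (e n), Q (e n))) atTop (nhds (xb, yb)) ∧
        u (xb.1, xb.2) - u (yb.1, xb.2) - φ (xb.1 - yb.1) = M) := by
  set K₁ : Set (EuclideanSpace ℝ (Fin d₁)) := {z | ∀ i, z i ∈ Icc (0:ℝ) 1} with hK₁def
  set K₂ : Set (EuclideanSpace ℝ (Fin d₂)) := {z | ∀ i, z i ∈ Icc (0:ℝ) 1} with hK₂def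
  have hK₁ : IsCompact K₁ := aux_cube_compact d₁
  have hK₂ : IsCompact K₂ := aux_cube_compact d₂
  have h0K₁ : (0 : EuclideanSpace ℝ (Fin d₁)) ∈ K₁ := fun i => ⟨le_rfl, zero_le_one⟩
  have h0K₂ : (0 : EuclideanSpace ℝ (Fin d₂)) ∈ K₂ := fun i => ⟨le_rfl, zero_le_one⟩
  obtain ⟨r₁, hr₁⟩ := isBounded_iff_forall_norm_le.mp hK₁.isBounded
  obtain ⟨r₂, hr₂⟩ := isBounded_iff_forall_norm_le.mp hK₂.isBounded
  have hr₁0 : 0 ≤ r₁ := by simpa using hr₁ 0 h0K₁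
  have hr₂0 : 0 ≤ r₂ := by simpa using hr₂ 0 h0K₂
  -- the periodic shift
  have shift : ∀ x y : EuclideanSpace ℝ (Fin d₁) × EuclideanSpace ℝ (Fin d₂),
      ∃ x' y' : EuclideanSpace ℝ (Fin d₁) × EuclideanSpace ℝ (Fin d₂),
      (x'.1 ∈ K₁ ∧ x'.2 ∈ K₂) ∧ x'.1 - y'.1 = x.1 - y.1 ∧ x'.2 - y'.2 = x.2 - y.2 ∧
      u x' = u x ∧ u y' = u y := by
    intro x y
    set k : Fin d₁ → ℤ := fun i => -⌊x.1 i⌋ with hk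
    set l : Fin d₂ → ℤ := fun i => -⌊x.2 i⌋ with hl
    set v₁ : EuclideanSpace ℝ (Fin d₁) :=
      (WithLp.equiv 2 (Fin d₁ → ℝ)).symm (fun i => (k i : ℝ)) with hv₁
    set v₂ : EuclideanSpace ℝ (Fin d₂) :=
      (WithLp.equiv 2 (Fin d₂ → ℝ)).symm (fun i => (l i : ℝ)) with hv₂
    refine ⟨(x.1 + v₁, x.2 + v₂), (y.1 + v₁, y.2 + v₂), ⟨?_, ?_⟩, by exact add_sub_add_right_eq_sub _ _ _,
      by exact add_sub_add_right_eq_sub _ _ _, ?_, ?_⟩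
    · intro i
      show (x.1 + v₁) i ∈ Icc (0:ℝ) 1
      have h : (x.1 + v₁) i = x.1 i + ((-⌊x.1 i⌋ : ℤ) : ℝ) := by
        simp [hv₁, hk]
      rw [h]
      push_cast
      constructor
      · linarith [Int.floor_le (x.1 i)]
      · linarith [Int.lt_floor_add_one (x.1 i)]
    · intro i
      show (x.2 + v₂) i ∈ Icc (0:ℝ) 1
      have h : (x.2 + v₂) i = x.2 i + ((-⌊x.2 i⌋ : ℤ) : ℝ) := by
        simp [hv₂, hl]
      rw [h]
      push_cast
      constructor
      · linarith [Int.floor_le (x.2 i)]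
      · linarith [Int.lt_floor_add_one (x.2 i)]
    · show u (x.1 + v₁, x.2 + v₂) = u x
      rw [hv₁, hv₂, huper k l x.1 x.2]
    · show u (y.1 + v₁, y.2 + v₂) = u y
      rw [hv₁, hv₂, huper k l y.1 y.2]
  -- u is bounded
  obtain ⟨C₀, hC₀⟩ := (hK₁.prod hK₂).exists_bound_of_continuousOn hu.continuousOn
  have hC : ∀ x : EuclideanSpace ℝ (Fin d₁) × EuclideanSpace ℝ (Fin d₂),
      |u x| ≤ max C₀ 0 := by
    intro x
    obtain ⟨x', _, ⟨hx1, hx2⟩, _, _, hux, _⟩ := shift x x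
    rw [← hux]
    exact le_trans (hC₀ x' ⟨hx1, hx2⟩) (le_max_left _ _)
  set C := max C₀ 0 with hCdef
  have hC0 : (0:ℝ) ≤ C := le_max_right _ _
  -- φ is bounded below
  have hBex : ∃ B : ℝ, ∀ z : EuclideanSpace ℝ (Fin d₁), B ≤ φ z := by
    obtain ⟨R, hR⟩ := aux_coer φ hφcoer (φ 0)
    obtain ⟨C₁, hC₁⟩ := (isCompact_closedBall (0:EuclideanSpace ℝ (Fin d₁))
      |R|).exists_bound_of_continuousOn hφ.continuousOn
    refine ⟨min (-C₁) (φ 0), fun z => ?_⟩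
    by_cases hz : ‖z‖ ≤ |R|
    · have h1 := hC₁ z (mem_closedBall_zero_iff.mpr hz)
      have h1' : |φ z| ≤ C₁ := by simpa using h1
      have h2 := abs_le.mp h1'
      exact le_trans (min_le_left _ _) (by linarith [h2.1])
    · push_neg at hz
      exact le_trans (min_le_right _ _) (hR z (le_trans (le_abs_self R) hz.le))
  obtain ⟨B, hB⟩ := hBex
  -- the set S
  set S : Set ℝ := {m : ℝ | ∃ (x₁ y₁ : EuclideanSpace ℝ (Fin d₁))
      (x₂ : EuclideanSpace ℝ (Fin d₂)),
      m = u (x₁, x₂) - u (y₁, x₂) - φ (x₁ - y₁)} with hSdef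
  have hS_ne : S.Nonempty := ⟨u (0,0) - u (0,0) - φ (0 - 0), 0, 0, 0, rfl⟩
  have hS_bdd : BddAbove S := by
    refine ⟨2*C - B, ?_⟩
    rintro m ⟨x₁, y₁, x₂, rfl⟩
    have h1 := abs_le.mp (hC (x₁, x₂))
    have h2 := abs_le.mp (hC (y₁, x₂))
    have h3 := hB (x₁ - y₁)
    linarith [h1.2, h2.1]
  -- Part 1: existence of maximizers
  have main1 : ∀ ε : ℝ, 0 < ε →
      ∃ x y : EuclideanSpace ℝ (Fin d₁) × EuclideanSpace ℝ (Fin d₂),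
        (∀ i, x.1 i ∈ Icc (0:ℝ) 1) ∧ (∀ i, x.2 i ∈ Icc (0:ℝ) 1) ∧
        ∀ x' y', ψ ε x' y' ≤ ψ ε x y := by
    intro ε hε
    obtain ⟨R₀, hR₀⟩ := aux_coer φ hφcoer (2*C + φ 0)
    set s : ℝ := Real.sqrt (max 0 (2*C - B + φ 0)) with hsdef
    have hs0 : 0 ≤ s := Real.sqrt_nonneg _
    set R₁ : ℝ := |R₀| + r₁ with hR₁def
    set R₂ : ℝ := r₂ + ε * s with hR₂def
    have hR₁0 : 0 ≤ R₁ := by positivity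
    have hR₂0 : 0 ≤ R₂ := by positivity
    set D : Set ((EuclideanSpace ℝ (Fin d₁) × EuclideanSpace ℝ (Fin d₂))
        × (EuclideanSpace ℝ (Fin d₁) × EuclideanSpace ℝ (Fin d₂))) :=
      (K₁ ×ˢ K₂) ×ˢ (closedBall 0 R₁ ×ˢ closedBall 0 R₂) with hDdef
    have hD : IsCompact D :=
      (hK₁.prod hK₂).prod ((isCompact_closedBall _ _).prod (isCompact_closedBall _ _))
    have hD_ne : ((0, 0), (0, 0)) ∈ D :=
      ⟨⟨h0K₁, h0K₂⟩, mem_closedBall_self hR₁0, mem_closedBall_self hR₂0⟩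
    have hcont : Continuous (fun p : (EuclideanSpace ℝ (Fin d₁) × EuclideanSpace ℝ (Fin d₂))
        × (EuclideanSpace ℝ (Fin d₁) × EuclideanSpace ℝ (Fin d₂)) => ψ ε p.1 p.2) := by
      have heq : (fun p : (EuclideanSpace ℝ (Fin d₁) × EuclideanSpace ℝ (Fin d₂))
          × (EuclideanSpace ℝ (Fin d₁) × EuclideanSpace ℝ (Fin d₂)) => ψ ε p.1 p.2)
          = fun p => u p.1 - u p.2 - φ (p.1.1 - p.2.1) - (ε ^ 2)⁻¹ * ‖p.1.2 - p.2.2‖ ^ 2 :=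
        funext fun p => hψ ε p.1 p.2
      rw [heq]
      fun_prop
    obtain ⟨p, hpD, hpmax0⟩ := hD.exists_isMaxOn ⟨_, hD_ne⟩ hcont.continuousOn
    have hpmax : ∀ q ∈ D, ψ ε q.1 q.2 ≤ ψ ε p.1 p.2 := isMaxOn_iff.mp hpmax0
    refine ⟨p.1, p.2, hpD.1.1, hpD.1.2, ?_⟩
    intro x' y'
    obtain ⟨x'', y'', ⟨hx1, hx2⟩, hd1, hd2, hux, huy⟩ := shift x' y'
    have hval : ψ ε x' y' = ψ ε x'' y'' := by
      rw [hψ, hψ, hux, huy, hd1, hd2]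
    rw [hval]
    have hx1n : ‖x''.1‖ ≤ r₁ := hr₁ _ hx1
    have hx2n : ‖x''.2‖ ≤ r₂ := hr₂ _ hx2
    have hxxD : (x'', x'') ∈ D :=
      ⟨⟨hx1, hx2⟩,
        mem_closedBall_zero_iff.mpr (le_trans hx1n (by rw [hR₁def]; linarith [abs_nonneg R₀])),
        mem_closedBall_zero_iff.mpr (le_trans hx2n
          (by rw [hR₂def]; nlinarith [mul_nonneg hε.le hs0]))⟩
    have hxxval : ψ ε x'' x'' = -φ 0 := by
      rw [hψ]
      simp only [sub_self, norm_zero]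
      norm_num
    have hlow : -φ 0 ≤ ψ ε p.1 p.2 := by
      have h : ψ ε x'' x'' ≤ ψ ε p.1 p.2 := hpmax (x'', x'') hxxD
      rwa [hxxval] at h
    by_cases hy1 : ‖y''.1‖ ≤ R₁
    · by_cases hy2 : ‖y''.2‖ ≤ R₂
      · have hmemD : (x'', y'') ∈ D := ⟨⟨hx1, hx2⟩, mem_closedBall_zero_iff.mpr hy1,
          mem_closedBall_zero_iff.mpr hy2⟩
        exact hpmax (x'', y'') hmemD
      · push_neg at hy2
        refine le_trans ?_ hlow
        rw [hψ]
        have h1 := abs_le.mp (hC x'')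
        have h2 := abs_le.mp (hC y'')
        have h3 := hB (x''.1 - y''.1)
        have hd : ε * s ≤ ‖x''.2 - y''.2‖ := by
          have hn : ‖y''.2‖ - ‖x''.2‖ ≤ ‖x''.2 - y''.2‖ := by
            rw [norm_sub_rev]; exact norm_sub_norm_le _ _
          have : R₂ - r₂ ≤ ‖x''.2 - y''.2‖ := by linarith
          calc ε * s = R₂ - r₂ := by rw [hR₂def]; ring
            _ ≤ _ := this
        have hpen : 2*C - B + φ 0 ≤ (ε ^ 2)⁻¹ * ‖x''.2 - y''.2‖ ^ 2 := by
          have hsq : (ε * s) ^ 2 ≤ ‖x''.2 - y''.2‖ ^ 2 :=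
            pow_le_pow_left₀ (by positivity) hd 2
          have heq2 : (ε ^ 2)⁻¹ * (ε * s) ^ 2 = s ^ 2 := by
            field_simp
          have hss : s ^ 2 = max 0 (2*C - B + φ 0) := Real.sq_sqrt (le_max_left _ _)
          have h5 : s ^ 2 ≤ (ε ^ 2)⁻¹ * ‖x''.2 - y''.2‖ ^ 2 := by
            rw [← heq2]
            exact mul_le_mul_of_nonneg_left hsq (by positivity)
          calc 2*C - B + φ 0 ≤ max 0 (2*C - B + φ 0) := le_max_right _ _
            _ = s ^ 2 := hss.symm
            _ ≤ _ := h5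
        linarith [h1.2, h2.1]
    · push_neg at hy1
      refine le_trans ?_ hlow
      rw [hψ]
      have h1 := abs_le.mp (hC x'')
      have h2 := abs_le.mp (hC y'')
      have hpen : (0:ℝ) ≤ (ε ^ 2)⁻¹ * ‖x''.2 - y''.2‖ ^ 2 := by positivity
      have hd : R₀ ≤ ‖x''.1 - y''.1‖ := by
        have h4 : ‖y''.1‖ - ‖x''.1‖ ≤ ‖x''.1 - y''.1‖ := by
          rw [norm_sub_rev]; exact norm_sub_norm_le _ _
        have h5 : |R₀| ≤ ‖x''.1 - y''.1‖ := by
          rw [hR₁def] at hy1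
          linarith
        linarith [le_abs_self R₀]
      have hφbig := hR₀ _ hd
      linarith [h1.2, h2.1]
  refine ⟨main1, ?_⟩
  -- Part 2
  intro P Q hPQ
  have hMle : ∀ ε : ℝ, 0 < ε → M ≤ ψ ε (P ε) (Q ε) := by
    intro ε hε
    rw [hM]
    apply csSup_le hS_ne
    rintro m ⟨x₁, y₁, x₂, rfl⟩
    have h := (hPQ ε hε).2.2 (x₁, x₂) (y₁, x₂)
    rw [hψ] at h
    simpa using h
  have hselfB : ∀ ε : ℝ, 0 < ε →
      φ ((P ε).1 - (Q ε).1) + (ε ^ 2)⁻¹ * ‖(P ε).2 - (Q ε).2‖ ^ 2 ≤ 2*C + φ 0 := by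
    intro ε hε
    have h := (hPQ ε hε).2.2 (P ε) (P ε)
    rw [hψ, hψ] at h
    simp only [sub_self, norm_zero] at h
    have h1 := abs_le.mp (hC (P ε))
    have h2 := abs_le.mp (hC (Q ε))
    have hz : ((0:ℝ)) ^ 2 = 0 := by norm_num
    rw [hz, mul_zero] at h
    linarith [h1.1, h1.2, h2.1, h2.2]
  obtain ⟨R', hR'⟩ := aux_coer φ hφcoer (2*C + φ 0 + 1)
  have hpen_nonneg : ∀ ε : ℝ, 0 < ε → (0:ℝ) ≤ (ε ^ 2)⁻¹ * ‖(P ε).2 - (Q ε).2‖ ^ 2 := by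
    intro ε hε; positivity
  have hQ1bd : ∀ ε : ℝ, 0 < ε → ‖(Q ε).1‖ ≤ r₁ + |R'| := by
    intro ε hε
    have hφle : φ ((P ε).1 - (Q ε).1) ≤ 2*C + φ 0 := by
      have h := hselfB ε hε
      linarith [hpen_nonneg ε hε]
    have hdn : ‖(P ε).1 - (Q ε).1‖ < R' := by
      by_contra hcon
      push_neg at hcon
      have := hR' _ hcon
      linarith
    have hP1 : ‖(P ε).1‖ ≤ r₁ := hr₁ _ (hPQ ε hε).1
    have hn : ‖(Q ε).1‖ - ‖(P ε).1‖ ≤ ‖(P ε).1 - (Q ε).1‖ := by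
      rw [norm_sub_rev]; exact norm_sub_norm_le _ _
    linarith [le_abs_self R']
  set c₂ : ℝ := Real.sqrt (max 0 (2*C + φ 0 - B)) with hc₂def
  have hc₂0 : 0 ≤ c₂ := Real.sqrt_nonneg _
  have hQ2diff : ∀ ε : ℝ, 0 < ε → ‖(P ε).2 - (Q ε).2‖ ≤ ε * c₂ := by
    intro ε hε
    have hpb : (ε ^ 2)⁻¹ * ‖(P ε).2 - (Q ε).2‖ ^ 2 ≤ 2*C + φ 0 - B := by
      have h := hselfB ε hε
      have h2 := hB ((P ε).1 - (Q ε).1)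
      linarith
    have hε2 : (0:ℝ) < ε ^ 2 := by positivity
    have h1 : ‖(P ε).2 - (Q ε).2‖ ^ 2 ≤ ε ^ 2 * (2*C + φ 0 - B) := by
      have h3 := mul_le_mul_of_nonneg_left hpb hε2.le
      calc ‖(P ε).2 - (Q ε).2‖ ^ 2
          = ε ^ 2 * ((ε ^ 2)⁻¹ * ‖(P ε).2 - (Q ε).2‖ ^ 2) := by
            field_simp
        _ ≤ ε ^ 2 * (2*C + φ 0 - B) := h3
    have hsq : ‖(P ε).2 - (Q ε).2‖ ^ 2 ≤ (ε * c₂) ^ 2 := by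
      have hc₂sq : c₂ ^ 2 = max 0 (2*C + φ 0 - B) := Real.sq_sqrt (le_max_left _ _)
      have : (ε * c₂) ^ 2 = ε ^ 2 * max 0 (2*C + φ 0 - B) := by
        rw [mul_pow, hc₂sq]
      rw [this]
      exact le_trans h1 (mul_le_mul_of_nonneg_left (le_max_right _ _) hε2.le)
    calc ‖(P ε).2 - (Q ε).2‖ = Real.sqrt (‖(P ε).2 - (Q ε).2‖ ^ 2) :=
          (Real.sqrt_sq (norm_nonneg _)).symm
      _ ≤ Real.sqrt ((ε * c₂) ^ 2) := Real.sqrt_le_sqrt hsq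
      _ = ε * c₂ := Real.sqrt_sq (by positivity)
  have hQ2bd : ∀ ε : ℝ, 0 < ε → ε ≤ 1 → ‖(Q ε).2‖ ≤ r₂ + c₂ := by
    intro ε hε hε1
    have hP2 : ‖(P ε).2‖ ≤ r₂ := hr₂ _ (hPQ ε hε).2.1
    have hn : ‖(Q ε).2‖ - ‖(P ε).2‖ ≤ ‖(P ε).2 - (Q ε).2‖ := by
      rw [norm_sub_rev]; exact norm_sub_norm_le _ _
    have hd := hQ2diff ε hε
    nlinarith
  -- the sequence
  set f : ℕ → ℝ := fun n => 1 / ((n : ℝ) + 1) with hfdef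
  have hf_pos : ∀ n, 0 < f n := fun n => by positivity
  have hf_le1 : ∀ n, f n ≤ 1 := by
    intro n
    rw [hfdef]
    rw [div_le_one (by positivity)]
    linarith [Nat.cast_nonneg (α := ℝ) n]
  have hf0 : Tendsto f atTop (nhds 0) := tendsto_one_div_add_atTop_nhds_zero_nat
  set a : ℕ → (EuclideanSpace ℝ (Fin d₁) × EuclideanSpace ℝ (Fin d₂))
      × (EuclideanSpace ℝ (Fin d₁) × EuclideanSpace ℝ (Fin d₂)) :=
    fun n => (P (f n), Q (f n)) with hadef
  set Kb : Set ((EuclideanSpace ℝ (Fin d₁) × EuclideanSpace ℝ (Fin d₂))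
      × (EuclideanSpace ℝ (Fin d₁) × EuclideanSpace ℝ (Fin d₂))) :=
    (K₁ ×ˢ K₂) ×ˢ (closedBall 0 (r₁ + |R'|) ×ˢ closedBall 0 (r₂ + c₂)) with hKbdef
  have hKb : IsCompact Kb :=
    (hK₁.prod hK₂).prod ((isCompact_closedBall _ _).prod (isCompact_closedBall _ _))
  have haKb : ∀ n, a n ∈ Kb := by
    intro n
    refine ⟨⟨(hPQ (f n) (hf_pos n)).1, (hPQ (f n) (hf_pos n)).2.1⟩,
      mem_closedBall_zero_iff.mpr (hQ1bd (f n) (hf_pos n)),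
      mem_closedBall_zero_iff.mpr (hQ2bd (f n) (hf_pos n) (hf_le1 n))⟩
  obtain ⟨pl, _, σ, hσmono, hσtend⟩ := hKb.tendsto_subseq haKb
  set e : ℕ → ℝ := fun n => f (σ n) with hedef
  have he_pos : ∀ n, 0 < e n := fun n => hf_pos (σ n)
  have he0 : Tendsto e atTop (nhds 0) := hf0.comp hσmono.tendsto_atTop
  have htend : Tendsto (fun n => (P (e n), Q (e n))) atTop (nhds (pl.1, pl.2)) := by
    have : pl = (pl.1, pl.2) := rfl
    rw [← this]
    exact hσtend
  have hP : Tendsto (fun n => P (e n)) atTop (nhds pl.1) :=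
    (continuous_fst.tendsto pl).comp hσtend
  have hQ : Tendsto (fun n => Q (e n)) atTop (nhds pl.2) :=
    (continuous_snd.tendsto pl).comp hσtend
  have hP2 : Tendsto (fun n => (P (e n)).2) atTop (nhds pl.1.2) :=
    (continuous_snd.tendsto pl.1).comp hP
  have hQ2 : Tendsto (fun n => (Q (e n)).2) atTop (nhds pl.2.2) :=
    (continuous_snd.tendsto pl.2).comp hQ
  have hP1 : Tendsto (fun n => (P (e n)).1) atTop (nhds pl.1.1) :=
    (continuous_fst.tendsto pl.1).comp hP
  have hQ1 : Tendsto (fun n => (Q (e n)).1) atTop (nhds pl.2.1) :=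
    (continuous_fst.tendsto pl.2).comp hQ
  -- the second components coincide in the limit
  have hdiffnorm : Tendsto (fun n => ‖(P (e n)).2 - (Q (e n)).2‖) atTop (nhds 0) := by
    apply squeeze_zero (fun n => norm_nonneg _) (fun n => hQ2diff (e n) (he_pos n))
    have : Tendsto (fun n => e n * c₂) atTop (nhds (0 * c₂)) := he0.mul_const c₂
    simpa using this
  have hxy2 : pl.1.2 = pl.2.2 := by
    have h1 : Tendsto (fun n => ‖(P (e n)).2 - (Q (e n)).2‖) atTop
        (nhds ‖pl.1.2 - pl.2.2‖) := (continuous_norm.tendsto _).comp (hP2.sub hQ2)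
    have h2 : ‖pl.1.2 - pl.2.2‖ = 0 := tendsto_nhds_unique h1 hdiffnorm
    rw [norm_eq_zero, sub_eq_zero] at h2
    exact h2
  -- penalization tends to zero
  have hpen0 : Tendsto (fun n => ((e n) ^ 2)⁻¹ * ‖(P (e n)).2 - (Q (e n)).2‖ ^ 2)
      atTop (nhds 0) := by
    have hub : ∀ n, ((e n) ^ 2)⁻¹ * ‖(P (e n)).2 - (Q (e n)).2‖ ^ 2
        ≤ u ((Q (e n)).1, (P (e n)).2) - u (Q (e n)) := by
      intro n
      have h := (hPQ (e n) (he_pos n)).2.2 (P (e n)) ((Q (e n)).1, (P (e n)).2)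
      rw [hψ, hψ] at h
      simp only [sub_self, norm_zero] at h
      have hz : ((0:ℝ)) ^ 2 = 0 := by norm_num
      rw [hz, mul_zero] at h
      linarith
    have hup : Tendsto (fun n => u ((Q (e n)).1, (P (e n)).2) - u (Q (e n)))
        atTop (nhds 0) := by
      have h1 : Tendsto (fun n => ((Q (e n)).1, (P (e n)).2)) atTop
          (nhds (pl.2.1, pl.1.2)) := hQ1.prodMk_nhds hP2
      have h2 : Tendsto (fun n => u ((Q (e n)).1, (P (e n)).2)) atTop
          (nhds (u (pl.2.1, pl.1.2))) := (hu.tendsto _).comp h1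
      have h3 : Tendsto (fun n => u (Q (e n))) atTop (nhds (u pl.2)) :=
        (hu.tendsto _).comp hQ
      have h4 := h2.sub h3
      have h5 : u (pl.2.1, pl.1.2) - u pl.2 = 0 := by
        rw [hxy2]
        simp
      rwa [h5] at h4
    exact squeeze_zero (fun n => hpen_nonneg (e n) (he_pos n)) hub hup
  -- convergence of ψ values
  have hψeq : (fun n => ψ (e n) (P (e n)) (Q (e n)))
      = fun n => u (P (e n)) - u (Q (e n)) - φ ((P (e n)).1 - (Q (e n)).1)
        - ((e n) ^ 2)⁻¹ * ‖(P (e n)).2 - (Q (e n)).2‖ ^ 2 :=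
    funext fun n => hψ (e n) (P (e n)) (Q (e n))
  have hcomp : Tendsto (fun n => ψ (e n) (P (e n)) (Q (e n))) atTop
      (nhds (u pl.1 - u pl.2 - φ (pl.1.1 - pl.2.1) - 0)) := by
    rw [hψeq]
    exact ((((hu.tendsto _).comp hP).sub ((hu.tendsto _).comp hQ)).sub
      ((hφ.tendsto _).comp (hP1.sub hQ1))).sub hpen0
  have hLM : u pl.1 - u pl.2 - φ (pl.1.1 - pl.2.1) - 0 = M := by
    have hmem : u pl.1 - u pl.2 - φ (pl.1.1 - pl.2.1) ∈ S := by
      refine ⟨pl.1.1, pl.2.1, pl.1.2, ?_⟩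
      have e1 : u (pl.1.1, pl.1.2) = u pl.1 := by rw [Prod.mk.eta]
      have e2 : u (pl.2.1, pl.1.2) = u pl.2 := by rw [hxy2, Prod.mk.eta]
      rw [e1, e2]
    have hle : u pl.1 - u pl.2 - φ (pl.1.1 - pl.2.1) ≤ M := by
      rw [hM]
      exact le_csSup hS_bdd hmem
    have hge : M ≤ u pl.1 - u pl.2 - φ (pl.1.1 - pl.2.1) - 0 :=
      ge_of_tendsto hcomp (Eventually.of_forall fun n => hMle (e n) (he_pos n))
    linarith
  refine ⟨e, pl.1, pl.2, he_pos, he0, hxy2, ?_, hpen0, htend, ?_⟩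
  · rwa [hLM] at hcomp
  · have e1 : u (pl.1.1, pl.1.2) = u pl.1 := by rw [Prod.mk.eta]
    have e2 : u (pl.2.1, pl.1.2) = u pl.2 := by rw [hxy2, Prod.mk.eta]
    rw [e1, e2]
    linarith
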